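/- In a fractional hedonic game with nonnegative valuations, if a coalition S of size at least 2 in a partition contains an agent with utility 0, and positivity of valuations is symmetric (v_a(b) > 0 iff v_b(a) > 0), and S is not a null coalition (some member of S has positive utility), then the partition is not Pareto-optimal. -/
import Mathlib


/-- A partition of the agent set `N` into coalitions: each agent `i` is assigned
the coalition `part i` containing her, and coalitions of members coincide. -/
structure HPartition (N : Type*) [Fintype N] [DecidableEq N] where
  part : N → Finset N
  mem_self : ∀ i, i ∈ part i
  eq_of_mem : ∀ i j, j ∈ part i → part j = part i

open Classical in
/-- Popularity margin `φ(π, π')`: number of agents strictly preferring `π`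
minus the number strictly preferring `π'`. -/
noncomputable def margin {N : Type*} [Fintype N] [DecidableEq N]
    (u : N → Finset N → ℝ) (π π' : HPartition N) : ℤ :=
  ((Finset.univ.filter fun i : N => u i (π'.part i) < u i (π.part i)).card : ℤ) -
  ((Finset.univ.filter fun i : N => u i (π.part i) < u i (π'.part i)).card : ℤ)

/-- A partition is popular if it never loses a pairwise vote. -/
def Popular {N : Type*} [Fintype N] [DecidableEq N]
    (u : N → Finset N → ℝ) (π : HPartition N) : Prop :=
  ∀ π' : HPartition N, 0 ≤ margin u π π'

/-- Fractional hedonic game utility of agent `i` in coalition `S`. -/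
noncomputable def fhgU {N : Type*} [DecidableEq N] (v : N → N → ℝ) (i : N) (S : Finset N) : ℝ :=
  (∑ j ∈ S.erase i, v i j) / (S.card : ℝ)

/-- A partition is Pareto-optimal if no partition weakly improves every agent
and strictly improves some agent. -/
def ParetoOptimal {N : Type*} [Fintype N] [DecidableEq N]
    (u : N → Finset N → ℝ) (π : HPartition N) : Prop :=
  ¬ ∃ π' : HPartition N,
      (∀ i, u i (π.part i) ≤ u i (π'.part i)) ∧ ∃ i, u i (π.part i) < u i (π'.part i)

/-- In an FHG with nonnegative valuations and symmetric positivity, a partition with a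
non-null coalition of size at least 2 containing a zero-utility agent is not
Pareto-optimal. -/
theorem fhg_zero_utility_in_nonnull_coalition_not_pareto_optimal
    {N : Type*} [Fintype N] [DecidableEq N]
    (v : N → N → ℝ) (hnn : ∀ a b, 0 ≤ v a b)
    (hsym : ∀ a b, 0 < v a b ↔ 0 < v b a)
    (π : HPartition N) (a i j : N)
    (hi : i ∈ π.part a) (hj : j ∈ π.part a)
    (hcard : 2 ≤ (π.part a).card)
    (hui : fhgU v i (π.part a) = 0)
    (huj : 0 < fhgU v j (π.part a)) :
    ¬ ParetoOptimal (fhgU v) π := by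
  classical
  set S := π.part a with hSdef
  have hpartS : ∀ m ∈ S, π.part m = S := fun m hm => π.eq_of_mem a m hm
  have hSc : 0 < S.card := by omega
  have hScard : (0:ℝ) < (S.card : ℝ) := by exact_mod_cast hSc
  have hnum : ∑ k ∈ S.erase i, v i k = 0 := by
    have h := hui
    unfold fhgU at h
    rcases div_eq_zero_iff.mp h with h1 | h1
    · exact h1
    · exact absurd h1 (ne_of_gt hScard)
  have hvi : ∀ m ∈ S.erase i, v i m = 0 := by
    intro m hm
    exact (Finset.sum_eq_zero_iff_of_nonneg (fun k _ => hnn i k)).mp hnum m hm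
  have hvmi : ∀ m ∈ S, m ≠ i → v m i = 0 := by
    intro m hm hne
    have h1 : v i m = 0 := hvi m (Finset.mem_erase.mpr ⟨hne, hm⟩)
    by_contra h
    have hpos : 0 < v m i := lt_of_le_of_ne (hnn m i) (Ne.symm h)
    have h2 : 0 < v i m := (hsym m i).mp hpos
    linarith
  have hji : j ≠ i := by
    intro h; rw [h] at huj; rw [hui] at huj; exact lt_irrefl 0 huj
  -- the new partition: i alone, others unchanged except S loses i
  have hiS : i ∈ S := hi
  have hnotS : ∀ k, k ∉ S → i ∉ π.part k := by
    intro k hk hmem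
    have := π.eq_of_mem k i hmem
    have hpi : π.part i = S := hpartS i hiS
    rw [hpi] at this
    exact hk (this ▸ π.mem_self k)
  have hnotS' : ∀ k, k ∉ S → ∀ l ∈ π.part k, l ∉ S := by
    intro k hk l hl hlS
    have h1 := π.eq_of_mem k l hl
    have h2 := hpartS l hlS
    rw [h2] at h1
    exact hk (h1 ▸ π.mem_self k)
  let f : N → Finset N := fun k => if k = i then {i} else if k ∈ S then S.erase i else π.part k
  have hfi : f i = {i} := by simp [f]
  have hfS : ∀ m ∈ S, m ≠ i → f m = S.erase i := by
    intro m hm hne; simp [f, hne, hm]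
  have hfo : ∀ m, m ∉ S → f m = π.part m := by
    intro m hm
    have hne : m ≠ i := fun h => hm (h ▸ hiS)
    simp [f, hne, hm]
  have hmem_self : ∀ k, k ∈ f k := by
    intro k
    by_cases hk : k = i
    · rw [hk, hfi]; exact Finset.mem_singleton_self _
    · by_cases hkS : k ∈ S
      · rw [hfS k hkS hk]; exact Finset.mem_erase.mpr ⟨hk, hkS⟩
      · rw [hfo k hkS]; exact π.mem_self k
  have heq_of_mem : ∀ k l, l ∈ f k → f l = f k := by
    intro k l hl
    by_cases hk : k = i
    · rw [hk] at hl ⊢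
      rw [hfi] at hl
      rw [Finset.mem_singleton] at hl
      rw [hl]
    · by_cases hkS : k ∈ S
      · rw [hfS k hkS hk] at hl ⊢
        rcases Finset.mem_erase.mp hl with ⟨hli, hlS⟩
        exact hfS l hlS hli
      · rw [hfo k hkS] at hl ⊢
        have hlS : l ∉ S := hnotS' k hkS l hl
        rw [hfo l hlS]
        exact π.eq_of_mem k l hl
  set π' : HPartition N := ⟨f, hmem_self, heq_of_mem⟩ with hπ'
  intro hPO
  apply hPO
  refine ⟨π', ?_, ⟨j, ?_⟩⟩
  · intro m
    by_cases hm : m = i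
    · have h1 : π.part m = S := by rw [hm]; exact hpartS i hiS
      have h2 : π'.part m = {i} := by rw [hm]; exact hfi
      have h3 : fhgU v m S = 0 := by rw [hm]; exact hui
      rw [h1, h2, h3]
      unfold fhgU
      simp only [Finset.card_singleton, Nat.cast_one, div_one]
      exact Finset.sum_nonneg fun k _ => hnn m k
    · by_cases hmS : m ∈ S
      · have h1 : π.part m = S := hpartS m hmS
        have h2 : π'.part m = S.erase i := hfS m hmS hm
        rw [h1, h2]
        unfold fhgU
        have hkey : ∑ k ∈ (S.erase i).erase m, v m k = ∑ k ∈ S.erase m, v m k := by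
          rw [Finset.erase_right_comm]
          exact Finset.sum_erase _ (hvmi m hmS hm)
        rw [hkey, Finset.card_erase_of_mem hiS]
        have hc1 : ((S.card - 1 : ℕ) : ℝ) = (S.card : ℝ) - 1 := by
          have : 1 ≤ S.card := by omega
          push_cast [this]; ring
        rw [hc1]
        have hpos1 : (0:ℝ) < (S.card : ℝ) - 1 := by
          have : (2:ℝ) ≤ (S.card : ℝ) := by exact_mod_cast hcard
          linarith
        have hnn' : 0 ≤ ∑ k ∈ S.erase m, v m k :=
          Finset.sum_nonneg (fun k _ => hnn m k)
        apply div_le_div_of_nonneg_left hnn' hpos1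
        linarith
      · have h2 : π'.part m = π.part m := hfo m hmS
        rw [h2]
  · have h1 : π.part j = S := hpartS j hj
    have h2 : π'.part j = S.erase i := hfS j hj hji
    rw [h1, h2]
    unfold fhgU
    have hkey : ∑ k ∈ (S.erase i).erase j, v j k = ∑ k ∈ S.erase j, v j k := by
      rw [Finset.erase_right_comm]
      exact Finset.sum_erase _ (hvmi j hj hji)
    rw [hkey, Finset.card_erase_of_mem hiS]
    have hc1 : ((S.card - 1 : ℕ) : ℝ) = (S.card : ℝ) - 1 := by
      have : 1 ≤ S.card := by omega
      push_cast [this]; ring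
    rw [hc1]
    have hpos1 : (0:ℝ) < (S.card : ℝ) - 1 := by
      have : (2:ℝ) ≤ (S.card : ℝ) := by exact_mod_cast hcard
      linarith
    have hnum_pos : 0 < ∑ k ∈ S.erase j, v j k := by
      have := huj
      unfold fhgU at this
      by_contra h
      push_neg at h
      have : (∑ k ∈ S.erase j, v j k) / (S.card : ℝ) ≤ 0 :=
        div_nonpos_of_nonpos_of_nonneg h (le_of_lt hScard)
      linarith
    apply div_lt_div_of_pos_left hnum_pos hpos1
    linarith
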